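/- Let (X,Y,R,Ř,Π) be a reduced root datum such that the fundamental weights ω_α (α ∈ Π) all lie in X, and let Y' ⊆ Y be the subgroup generated by the coroots Ř. Define p : Y → Y' by p(y) = Σ_{α∈Π} ⟨ω_α, y⟩·α̌. Then p(y') = y' for every y' ∈ Y', and p is W-equivariant: p(w·y) = w·p(y) for every w ∈ W and y ∈ Y, where W acts on Y by dual reflections. In particular p is a W-equivariant split surjection of Y onto Y'. -/

import Mathlib

/-- A reduced root datum. -/
structure RRDatum (X Y : Type*) [AddCommGroup X] [AddCommGroup Y] where
  pair : X →+ Y →+ ℤ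
  perfL : Function.Bijective fun x : X => pair x
  perfR : Function.Bijective fun y : Y => pair.flip y
  R : Finset X
  coroot : X → Y
  coroot_injOn : Set.InjOn coroot ↑R
  pair_self : ∀ α ∈ R, pair α (coroot α) = 2
  refl_mem : ∀ α ∈ R, ∀ β ∈ R, β - pair β (coroot α) • α ∈ R
  corefl_mem : ∀ α ∈ R, ∀ β ∈ R, coroot β - pair α (coroot β) • coroot α ∈ coroot '' ↑R
  isReduced : ∀ α ∈ R, ∀ n : ℤ, n • α ∈ R → n = 1 ∨ n = -1
  base : Finset X
  base_sub : base ⊆ R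
  base_indep : LinearIndependent ℤ (fun a : {x : X // x ∈ base} => (a : X))
  base_span : ∀ β ∈ R, (∃ c : X → ℕ, (β : X) = ∑ a ∈ base, (c a : ℤ) • a) ∨
      (∃ c : X → ℕ, (β : X) = -∑ a ∈ base, (c a : ℤ) • a)

namespace RRDatum

variable {X Y : Type*} [AddCommGroup X] [AddCommGroup Y] (D : RRDatum X Y)

/-- The reflection associated to a root. -/
def refl (α : X) : X → X := fun x => x - D.pair x (D.coroot α) • α

lemma refl_involutive {α : X} (hα : α ∈ D.R) : Function.Involutive (D.refl α) := by
  intro x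
  simp only [refl, map_sub, map_zsmul, AddMonoidHom.sub_apply, AddMonoidHom.smul_apply,
    D.pair_self α hα, smul_eq_mul]
  rw [sub_smul]
  simp [mul_comm, two_mul, sub_smul, add_smul]

/-- The reflection as an additive automorphism. -/
def reflAut {α : X} (hα : α ∈ D.R) : X ≃+ X where
  toFun := D.refl α
  invFun := D.refl α
  left_inv := D.refl_involutive hα
  right_inv := D.refl_involutive hα
  map_add' x y := by
    simp only [refl, map_add, AddMonoidHom.add_apply, add_smul]
    abel

/-- The element of the Weyl group given by a word in simple reflections; the head of
the list is applied first, i.e. `word [α₁, …, αₙ] = s_{αₙ} ∘ ⋯ ∘ s_{α₁}`. -/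
def word (l : List X) : X → X := l.foldr (fun α f => f ∘ D.refl α) id

/-- The length of an element of the Weyl group with respect to the simple reflections. -/
noncomputable def len (w : X → X) : ℕ :=
  sInf {n | ∃ l : List X, (∀ α ∈ l, α ∈ D.base) ∧ l.length = n ∧ D.word l = w}

end RRDatum

/-- The dual reflection `s_α̌ : Y → Y`, `y ↦ y − ⟨α, y⟩α̌`. -/
def RRDatum.corefl {X Y : Type*} [AddCommGroup X] [AddCommGroup Y] (D : RRDatum X Y)
    (α : X) : Y → Y := fun y => y - D.pair α y • D.coroot α


namespace RRDatum

variable {X Y : Type*} [AddCommGroup X] [AddCommGroup Y] (D : RRDatum X Y)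

lemma refl_involutive' {α : X} (hα : α ∈ D.R) :
    ∀ x : X, x - D.pair x (D.coroot α) • α -
      D.pair (x - D.pair x (D.coroot α) • α) (D.coroot α) • α = x := by
  intro x
  simp only [map_sub, map_zsmul, AddMonoidHom.sub_apply, AddMonoidHom.smul_apply,
    D.pair_self α hα, smul_eq_mul]
  module

include D in
lemma eq_zero_of_zsmul_eq_zero {d : X} {c : ℤ} (hc : c ≠ 0) (h : c • d = 0) : d = 0 := by
  have hinj : Function.Injective fun x : X => D.pair x := D.perfL.1
  have h0 : D.pair d = D.pair 0 := by
    ext y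
    have h1 : D.pair (c • d) y = 0 := by rw [h]; simp
    rw [map_zsmul] at h1
    simp only [AddMonoidHom.smul_apply, smul_eq_mul] at h1
    rcases mul_eq_zero.mp h1 with h2 | h2
    · exact absurd h2 hc
    · simpa using h2
  exact hinj h0

lemma keyA {γ β : X} (hγ : γ ∈ D.R) (hβ : β ∈ D.R) :
    D.coroot (β - D.pair β (D.coroot γ) • γ) =
      D.coroot β - D.pair γ (D.coroot β) • D.coroot γ := by
  obtain ⟨β', hβ'R, hco⟩ := D.corefl_mem γ hγ β hβ
  suffices hx : β - D.pair β (D.coroot γ) • γ = β' by rw [hx, hco]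
  set k : ℤ := D.pair γ (D.coroot β) with hk
  set l : ℤ := D.pair β (D.coroot γ) with hl
  rw [← sub_eq_zero]
  set d : X := (β - l • γ) - β' with hd
  -- scalar facts
  have hg : D.pair β' (D.coroot β) = 2 + k * D.pair β' (D.coroot γ) := by
    have hself := D.pair_self β' hβ'R
    rw [hco] at hself
    simp only [map_sub, map_zsmul, smul_eq_mul] at hself
    linarith
  have hfx0 : D.pair (β - l • γ) (D.coroot β') = 2 := by
    rw [hco]
    simp only [map_sub, map_zsmul, AddMonoidHom.sub_apply, AddMonoidHom.smul_apply,
      smul_eq_mul, D.pair_self β hβ, D.pair_self γ hγ, ← hk, ← hl]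
    ring
  have hfd : D.pair d (D.coroot β') = 0 := by
    rw [hd, map_sub, AddMonoidHom.sub_apply, hfx0, D.pair_self β' hβ'R]
    ring
  -- the step map
  have step : ∀ x ∈ D.R, x + D.pair x (D.coroot β') • d ∈ D.R := by
    intro x hx
    have h1 : x - D.pair x (D.coroot β') • β' ∈ D.R := D.refl_mem β' hβ'R x hx
    have h2 := D.refl_mem γ hγ _ h1
    have h3 := D.refl_mem β hβ _ h2
    have h4 := D.refl_mem γ hγ _ h3
    have heq :
        ((x - D.pair x (D.coroot β') • β' -
            D.pair (x - D.pair x (D.coroot β') • β') (D.coroot γ) • γ) -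
          D.pair (x - D.pair x (D.coroot β') • β' -
            D.pair (x - D.pair x (D.coroot β') • β') (D.coroot γ) • γ) (D.coroot β) • β) -
          D.pair ((x - D.pair x (D.coroot β') • β' -
            D.pair (x - D.pair x (D.coroot β') • β') (D.coroot γ) • γ) -
          D.pair (x - D.pair x (D.coroot β') • β' -
            D.pair (x - D.pair x (D.coroot β') • β') (D.coroot γ) • γ) (D.coroot β) • β)
            (D.coroot γ) • γ
        = x + D.pair x (D.coroot β') • d := by
      have hfx : D.pair x (D.coroot β') =
          D.pair x (D.coroot β) - k * D.pair x (D.coroot γ) := by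
        rw [hco]; simp [smul_eq_mul]
      rw [hd]
      simp only [map_sub, map_zsmul, AddMonoidHom.sub_apply, AddMonoidHom.smul_apply,
        smul_eq_mul, D.pair_self β hβ, D.pair_self γ hγ, ← hk, ← hl, hfx, hg]
      module
    rw [heq] at h4
    exact h4
  -- iterate
  have iter : ∀ n : ℕ, (β - l • γ) + (2 * (n : ℤ)) • d ∈ D.R := by
    intro n
    induction n with
    | zero => simpa using D.refl_mem γ hγ β hβ
    | succ n ih =>
      have hval : D.pair ((β - l • γ) + (2 * (n : ℤ)) • d) (D.coroot β') = 2 := by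
        rw [map_add, AddMonoidHom.add_apply, map_zsmul, AddMonoidHom.smul_apply,
          hfx0, hfd]
        simp
      have h5 := step _ ih
      rw [hval] at h5
      have : (β - l • γ) + (2 * (n : ℤ)) • d + (2 : ℤ) • d
          = (β - l • γ) + (2 * ((n : ℤ) + 1)) • d := by module
      rw [this] at h5
      push_cast
      exact h5
  have hfin : ∃ m n : ℕ, m ≠ n ∧
      (β - l • γ) + (2 * (m : ℤ)) • d = (β - l • γ) + (2 * (n : ℤ)) • d := by
    obtain ⟨m, n, hmn, he⟩ := Finite.exists_ne_map_eq_of_infinite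
      (fun n : ℕ => (⟨_, iter n⟩ : {x // x ∈ D.R}))
    exact ⟨m, n, hmn, congrArg Subtype.val he⟩
  obtain ⟨m, n, hmn, he⟩ := hfin
  have h6 : (2 * (m : ℤ) - 2 * (n : ℤ)) • d = 0 := by
    have h7 := add_left_cancel he
    rw [sub_smul, h7, sub_self]
  exact D.eq_zero_of_zsmul_eq_zero (by
    intro h0
    apply hmn
    omega) h6

def Bform (x y : X) : ℤ := ∑ β ∈ D.R, D.pair x (D.coroot β) * D.pair y (D.coroot β)

lemma Bform_self_pos {γ : X} (hγ : γ ∈ D.R) : 0 < D.Bform γ γ := by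
  apply Finset.sum_pos'
  · exact fun i _ => mul_self_nonneg _
  · exact ⟨γ, hγ, by rw [D.pair_self γ hγ]; norm_num⟩

lemma Bform_comm (x y : X) : D.Bform x y = D.Bform y x :=
  Finset.sum_congr rfl (fun _ _ => mul_comm _ _)

lemma Bform_reflection {γ : X} (hγ : γ ∈ D.R) (x : X) :
    2 * D.Bform x γ = D.pair x (D.coroot γ) * D.Bform γ γ := by
  have hpair : ∀ β ∈ D.R,
      (2 * (D.pair x (D.coroot β) * D.pair γ (D.coroot β)) -
        D.pair x (D.coroot γ) * (D.pair γ (D.coroot β) * D.pair γ (D.coroot β))) +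
      (2 * (D.pair x (D.coroot (β - D.pair β (D.coroot γ) • γ)) *
            D.pair γ (D.coroot (β - D.pair β (D.coroot γ) • γ))) -
        D.pair x (D.coroot γ) *
          (D.pair γ (D.coroot (β - D.pair β (D.coroot γ) • γ)) *
           D.pair γ (D.coroot (β - D.pair β (D.coroot γ) • γ)))) = 0 := by
    intro β hβ
    rw [D.keyA hγ hβ]
    simp only [map_sub, map_zsmul, AddMonoidHom.sub_apply, AddMonoidHom.smul_apply,
      smul_eq_mul, D.pair_self γ hγ]
    ring
  have h0 : ∑ β ∈ D.R,
      (2 * (D.pair x (D.coroot β) * D.pair γ (D.coroot β)) -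
        D.pair x (D.coroot γ) * (D.pair γ (D.coroot β) * D.pair γ (D.coroot β))) = 0 := by
    apply Finset.sum_involution (fun β _ => β - D.pair β (D.coroot γ) • γ)
    · exact hpair
    · intro β hβ hne habs
      apply hne
      have := hpair β hβ
      rw [habs] at this
      linarith
    · exact fun β hβ => D.refl_mem γ hγ β hβ
    · intro β hβ
      exact D.refl_involutive' hγ β
  rw [Finset.sum_sub_distrib] at h0
  have h1 : ∑ β ∈ D.R, 2 * (D.pair x (D.coroot β) * D.pair γ (D.coroot β))
      = 2 * D.Bform x γ := by unfold Bform; rw [Finset.mul_sum]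
  have h2 : ∑ β ∈ D.R, D.pair x (D.coroot γ) *
      (D.pair γ (D.coroot β) * D.pair γ (D.coroot β))
      = D.pair x (D.coroot γ) * D.Bform γ γ := by unfold Bform; rw [Finset.mul_sum]
  rw [h1, h2, sub_eq_zero] at h0
  exact h0

lemma Bform_sum (s : Finset X) (c : X → ℤ) (y : X) :
    D.Bform (∑ a ∈ s, c a • a) y = ∑ a ∈ s, c a * D.Bform a y := by
  unfold Bform
  have : ∀ β, D.pair (∑ a ∈ s, c a • a) (D.coroot β)
      = ∑ a ∈ s, c a * D.pair a (D.coroot β) := by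
    intro β
    rw [map_sum, AddMonoidHom.finset_sum_apply]
    exact Finset.sum_congr rfl fun a _ => by
      rw [map_zsmul]; simp [smul_eq_mul]
  simp only [this, Finset.sum_mul, Finset.mul_sum]
  rw [Finset.sum_comm]
  exact Finset.sum_congr rfl fun a _ => Finset.sum_congr rfl fun β _ => by ring

include D in
lemma indep_coeffs (g : X → ℤ) (h : ∑ a ∈ D.base, g a • a = 0) : ∀ a ∈ D.base, g a = 0 := by
  classical
  have h2 : ∑ i : {x : X // x ∈ D.base}, g ↑i • (↑i : X) = 0 := by
    rw [Finset.sum_coe_sort D.base (fun a => g a • a)]; exact h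
  intro a ha
  exact Fintype.linearIndependent_iff.mp D.base_indep (fun i => g ↑i) h2 ⟨a, ha⟩

lemma coroot_mem_pos : ∀ n : ℕ, ∀ β ∈ D.R, ∀ c : X → ℕ,
    β = ∑ a ∈ D.base, (c a : ℤ) • a → ∑ a ∈ D.base, c a = n →
    D.coroot β ∈ AddSubgroup.closure (D.coroot '' (↑D.base : Set X)) := by
  classical
  intro n
  induction n using Nat.strong_induction_on with
  | _ n ih =>
  intro β hβ c hc hn
  by_cases hb : β ∈ D.base
  · exact AddSubgroup.subset_closure ⟨β, hb, rfl⟩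
  have hBpos : 0 < D.Bform β β := D.Bform_self_pos hβ
  have hsum : D.Bform β β = ∑ a ∈ D.base, (c a : ℤ) * D.Bform a β := by
    nth_rewrite 1 [hc]
    exact D.Bform_sum D.base _ β
  have hex : ∃ a ∈ D.base, 0 < (c a : ℤ) * D.Bform a β := by
    by_contra hcon
    push_neg at hcon
    have : D.Bform β β ≤ 0 := hsum ▸ Finset.sum_nonpos hcon
    linarith
  obtain ⟨γ, hγb, hγpos⟩ := hex
  have hγR : γ ∈ D.R := D.base_sub hγb
  have hBγβ : 0 < D.Bform γ β := by
    rcases lt_or_ge 0 (D.Bform γ β) with h | h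
    · exact h
    · nlinarith [Int.natCast_nonneg (c γ)]
  have hk : 0 < D.pair β (D.coroot γ) := by
    have h2 := D.Bform_reflection hγR β
    have h3 := D.Bform_self_pos hγR
    have h4 : D.Bform β γ = D.Bform γ β := D.Bform_comm β γ
    nlinarith
  set k : ℤ := D.pair β (D.coroot γ) with hkdef
  have hβ1R : β - k • γ ∈ D.R := D.refl_mem γ hγR β hβ
  have hγL : D.coroot γ ∈ AddSubgroup.closure (D.coroot '' (↑D.base : Set X)) :=
    AddSubgroup.subset_closure ⟨γ, hγb, rfl⟩
  have hco : D.coroot β =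
      D.coroot (β - k • γ) - D.pair γ (D.coroot (β - k • γ)) • D.coroot γ := by
    have h1 := D.keyA hγR hβ1R
    have h2 : D.pair (β - k • γ) (D.coroot γ) = -k := by
      rw [map_sub, AddMonoidHom.sub_apply, map_zsmul, AddMonoidHom.smul_apply,
        D.pair_self γ hγR, ← hkdef]
      simp; ring
    rw [h2] at h1
    have h3 : (β - k • γ) - (-k) • γ = β := by module
    rw [h3] at h1
    exact h1
  suffices hmem1 : D.coroot (β - k • γ) ∈
      AddSubgroup.closure (D.coroot '' (↑D.base : Set X)) by
    rw [hco]
    exact AddSubgroup.sub_mem _ hmem1 (AddSubgroup.zsmul_mem _ hγL _)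
  rcases D.base_span _ hβ1R with ⟨c', hc'⟩ | ⟨c', hc'⟩
  · -- positive case: strictly smaller height
    have hcoef : ∀ a ∈ D.base, (c' a : ℤ) = (c a : ℤ) - (if a = γ then k else 0) := by
      have h0 : ∑ a ∈ D.base, ((c' a : ℤ) - (c a : ℤ) + (if a = γ then k else 0)) • a = 0 := by
        simp only [sub_smul, add_smul, ite_smul, zero_smul]
        rw [Finset.sum_add_distrib, Finset.sum_sub_distrib,
          Finset.sum_ite_eq' D.base γ (fun b => k • b), if_pos hγb, ← hc', ← hc]
        module
      intro a ha
      have := D.indep_coeffs _ h0 a ha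
      linarith
    have hsums : ∑ a ∈ D.base, c' a < n := by
      have h1 : ((∑ a ∈ D.base, c' a : ℕ) : ℤ) = ((∑ a ∈ D.base, c a : ℕ) : ℤ) - k := by
        push_cast
        rw [Finset.sum_congr rfl hcoef, Finset.sum_sub_distrib,
          Finset.sum_ite_eq' D.base γ (fun _ => k), if_pos hγb]
      have h2 : ((∑ a ∈ D.base, c a : ℕ) : ℤ) = (n : ℤ) := by exact_mod_cast hn
      omega
    exact ih _ hsums _ hβ1R c' hc' rfl
  · -- negative case: forces β to be a multiple of γ, contradiction
    exfalso
    have h0 : ∑ a ∈ D.base, ((c a : ℤ) + (c' a : ℤ) - (if a = γ then k else 0)) • a = 0 := by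
      simp only [add_smul, sub_smul, ite_smul, zero_smul]
      rw [Finset.sum_sub_distrib, Finset.sum_add_distrib,
        Finset.sum_ite_eq' D.base γ (fun b => k • b), if_pos hγb, ← hc]
      have h1 : ∑ a ∈ D.base, (c' a : ℤ) • a = -(β - k • γ) := by
        have h2 := congrArg Neg.neg hc'
        rw [neg_neg] at h2
        exact h2.symm
      rw [h1]
      module
    have hzero := D.indep_coeffs _ h0
    have hβγ : β = (c γ : ℤ) • γ := by
      rw [hc]
      rw [Finset.sum_eq_single_of_mem γ hγb]
      intro b hb hne
      have := hzero b hb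
      simp [hne] at this
      have hcb : (c b : ℤ) = 0 := by omega
      rw [hcb, zero_smul]
    have := D.isReduced γ hγR (c γ) (by rw [← hβγ]; exact hβ)
    have hcγ : (c γ : ℤ) = 1 := by omega
    rw [hcγ, one_smul] at hβγ
    rw [hβγ] at hb
    exact hb hγb

lemma coroot_mem {β : X} (hβ : β ∈ D.R) :
    D.coroot β ∈ AddSubgroup.closure (D.coroot '' (↑D.base : Set X)) := by
  rcases D.base_span β hβ with ⟨c, hc⟩ | ⟨c, hc⟩
  · exact D.coroot_mem_pos _ β hβ c hc rfl
  · have hnegR : -β ∈ D.R := by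
      have h1 := D.refl_mem β hβ β hβ
      rw [D.pair_self β hβ] at h1
      have h2 : β - (2:ℤ) • β = -β := by module
      rwa [h2] at h1
    have hrel : D.coroot (-β) = - D.coroot β := by
      have h1 := D.keyA hβ hβ
      rw [D.pair_self β hβ] at h1
      have h2 : β - (2:ℤ) • β = -β := by module
      rw [h2] at h1
      rw [h1]
      module
    have hpos : D.coroot (-β) ∈ AddSubgroup.closure (D.coroot '' (↑D.base : Set X)) := by
      apply D.coroot_mem_pos _ (-β) hnegR c _ rfl
      rw [hc, neg_neg]
    have : D.coroot β = - D.coroot (-β) := by rw [hrel, neg_neg]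
    rw [this]
    exact AddSubgroup.neg_mem _ hpos

end RRDatum

/-- If the fundamental weights all lie in `X` and `Y'` is the subgroup of `Y`
generated by the coroots, then `p : Y → Y'`, `p(y) = Σ_{α∈Π} ⟨ω_α, y⟩·α̌`, satisfies
`p(y') = y'` for `y' ∈ Y'`, is `W`-equivariant for the dual action of the Weyl group on `Y`,
and takes values in `Y'`; in particular it is a `W`-equivariant split surjection onto `Y'`. -/
theorem fundamental_weight_projection
    {X Y : Type*} [AddCommGroup X] [AddCommGroup Y] (D : RRDatum X Y)
    (ω : X → X)
    -- each `ω α` lies in the `ℚ`-span of the roots …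
    (hωspan : ∀ α ∈ D.base, ∃ nz : ℤ, nz ≠ 0 ∧
        nz • ω α ∈ Submodule.span ℤ (↑D.R : Set X))
    -- … and satisfies `⟨ω_α, β̌⟩ = δ_{α,β}` for all simple `β`:
    (hω : ∀ α ∈ D.base, ∀ β ∈ D.base,
        (β = α → D.pair (ω α) (D.coroot β) = 1) ∧
        (β ≠ α → D.pair (ω α) (D.coroot β) = 0))
    (Y' : AddSubgroup Y) (hY' : Y' = AddSubgroup.closure (D.coroot '' ↑D.R))
    (W : AddSubgroup (AddAut Y))
    (hW : W = AddSubgroup.closure {w : AddAut Y | ∃ α ∈ D.base, ⇑w = D.corefl α})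
    (p : Y → Y) (hp : ∀ y, p y = ∑ α ∈ D.base, D.pair (ω α) y • D.coroot α) :
    (∀ y ∈ Y', p y = y) ∧
    (∀ w ∈ W, ∀ y : Y, p (w y) = w (p y)) ∧
    (∀ y : Y, p y ∈ Y') := by
  classical
  subst hY' hW
  -- basic linearity of p
  have hpzero : p 0 = 0 := by simp [hp]
  have hpadd : ∀ y z : Y, p (y + z) = p y + p z := by
    intro y z
    simp only [hp, map_add, add_smul]
    rw [Finset.sum_add_distrib]
  have hpsmul : ∀ (c : ℤ) (y : Y), p (c • y) = c • p y := by
    intro c y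
    simp only [hp, map_zsmul, smul_eq_mul, mul_smul]
    rw [← Finset.smul_sum]
  have hpneg : ∀ y : Y, p (-y) = - p y := by
    intro y
    have := hpsmul (-1) y
    simpa using this
  have hpsub : ∀ y z : Y, p (y - z) = p y - p z := by
    intro y z
    rw [sub_eq_add_neg, hpadd, hpneg, sub_eq_add_neg]
  -- p fixes simple coroots
  have psimple : ∀ γ ∈ D.base, p (D.coroot γ) = D.coroot γ := by
    intro γ hγ
    rw [hp, Finset.sum_eq_single_of_mem γ hγ]
    · rw [(hω γ hγ γ hγ).1 rfl, one_smul]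
    · intro b hb hne
      rw [(hω b hb γ hγ).2 hne.symm, zero_smul]
  -- the subgroup of fixed points
  let S : AddSubgroup Y :=
    { carrier := {y | p y = y}
      zero_mem' := hpzero
      add_mem' := fun {a b} ha hb => by
        simp only [Set.mem_setOf_eq] at *
        rw [hpadd, ha, hb]
      neg_mem' := fun {a} ha => by
        simp only [Set.mem_setOf_eq] at *
        rw [hpneg, ha] }
  have hLfix : AddSubgroup.closure (D.coroot '' (↑D.base : Set X)) ≤ S := by
    rw [AddSubgroup.closure_le]
    rintro _ ⟨γ, hγ, rfl⟩
    exact psimple γ (Finset.mem_coe.mp hγ)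
  have hfix : AddSubgroup.closure (D.coroot '' (↑D.R : Set X)) ≤ S := by
    rw [AddSubgroup.closure_le]
    rintro _ ⟨β, hβ, rfl⟩
    exact hLfix (D.coroot_mem (Finset.mem_coe.mp hβ))
  -- pairing with fundamental weights is preserved by p
  have hωfix : ∀ α ∈ D.base, ∀ y : Y, D.pair (ω α) (p y) = D.pair (ω α) y := by
    intro α hα y
    rw [hp, map_sum, Finset.sum_eq_single_of_mem α hα]
    · rw [map_zsmul, (hω α hα α hα).1 rfl]
      simp
    · intro b hb hne
      rw [map_zsmul, (hω α hα b hb).2 hne, smul_zero]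
  -- pairing with simple roots is preserved by p (matrix adjugate argument)
  have hstar : ∀ γ ∈ D.base, ∀ y : Y, D.pair γ (p y) = D.pair γ y := by
    have hRspan : Submodule.span ℤ (↑D.R : Set X) ≤ Submodule.span ℤ (↑D.base : Set X) := by
      rw [Submodule.span_le]
      intro β hβ
      rcases D.base_span β (Finset.mem_coe.mp hβ) with ⟨c, hc⟩ | ⟨c, hc⟩
      · rw [hc]
        exact Submodule.sum_mem _ fun a ha => Submodule.smul_mem _ _
          (Submodule.subset_span (Finset.mem_coe.mpr ha))
      · rw [hc]
        exact neg_mem (Submodule.sum_mem _ fun a ha => Submodule.smul_mem _ _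
          (Submodule.subset_span (Finset.mem_coe.mpr ha)))
    choose nz hnz hvspan using hωspan
    have hv : ∀ α (hα : α ∈ D.base), ∃ f : X → ℤ,
        ∑ i ∈ D.base, f i • i = nz α hα • ω α :=
      fun α hα => (Submodule.mem_span_finset.mp (hRspan (hvspan α hα))).imp fun _ h => h.2
    choose f hf using hv
    set A : Matrix {x : X // x ∈ D.base} {x : X // x ∈ D.base} ℤ :=
      fun α δ => f ↑α α.2 ↑δ with hA
    set C : Matrix {x : X // x ∈ D.base} {x : X // x ∈ D.base} ℤ :=
      fun δ ε => D.pair ↑δ (D.coroot ↑ε) with hC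
    have hsum' : ∀ (α : {x : X // x ∈ D.base}) (z : Y),
        (∑ δ : {x : X // x ∈ D.base}, A α δ * D.pair ↑δ z)
          = nz ↑α α.2 * D.pair (ω ↑α) z := by
      intro α z
      have h1 : D.pair (∑ i ∈ D.base, f ↑α α.2 i • i) z
          = ∑ i ∈ D.base, f ↑α α.2 i * D.pair i z := by
        rw [map_sum, AddMonoidHom.finset_sum_apply]
        exact Finset.sum_congr rfl fun i _ => by
          rw [map_zsmul]
          simp [smul_eq_mul]
      rw [hf ↑α α.2] at h1
      rw [Finset.sum_coe_sort D.base (fun i => f ↑α α.2 i * D.pair i z), ← h1,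
        map_zsmul]
      simp [smul_eq_mul]
    have hACdiag : A * C = Matrix.diagonal
        (fun α : {x : X // x ∈ D.base} => nz ↑α α.2) := by
      ext α ε
      rw [Matrix.mul_apply]
      have h2 := hsum' α (D.coroot ↑ε)
      rw [h2]
      rcases eq_or_ne α ε with h | h
      · subst h
        rw [(hω ↑α α.2 ↑α α.2).1 rfl]
        simp [Matrix.diagonal]
      · rw [(hω ↑α α.2 ↑ε ε.2).2 (fun hc => h (Subtype.ext hc).symm)]
        simp [Matrix.diagonal, h]
    have hdetA : Matrix.det A ≠ 0 := by
      intro h0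
      have h1 := congrArg Matrix.det hACdiag
      rw [Matrix.det_mul, h0, zero_mul, Matrix.det_diagonal] at h1
      have h2 : (∏ i : {x : X // x ∈ D.base}, nz ↑i i.2) ≠ 0 :=
        Finset.prod_ne_zero_iff.mpr (fun i _ => hnz ↑i i.2)
      exact h2 h1.symm
    intro γ hγ y
    have hcomb : (Matrix.det A) • γ
        = ∑ α : {x : X // x ∈ D.base},
            (Matrix.adjugate A ⟨γ, hγ⟩ α) • (nz ↑α α.2 • ω ↑α) := by
      have h1 : ∀ α : {x : X // x ∈ D.base},
          (nz ↑α α.2 • ω ↑α : X) = ∑ δ : {x : X // x ∈ D.base}, A α δ • (↑δ : X) := by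
        intro α
        rw [← hf ↑α α.2, ← Finset.sum_coe_sort D.base (fun i => f ↑α α.2 i • i)]
      simp only [h1, Finset.smul_sum, smul_smul]
      rw [Finset.sum_comm]
      have h2 : ∀ δ : {x : X // x ∈ D.base},
          (∑ α : {x : X // x ∈ D.base},
            (Matrix.adjugate A ⟨γ, hγ⟩ α * A α δ) • (↑δ : X))
          = ((Matrix.adjugate A * A) ⟨γ, hγ⟩ δ) • (↑δ : X) := by
        intro δ
        rw [Matrix.mul_apply, Finset.sum_smul]
      simp only [h2, Matrix.adjugate_mul]
      have h3 : ∀ δ : {x : X // x ∈ D.base},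
          ((Matrix.det A • (1 : Matrix {x : X // x ∈ D.base} {x : X // x ∈ D.base} ℤ))
            ⟨γ, hγ⟩ δ) • (↑δ : X)
          = if δ = ⟨γ, hγ⟩ then Matrix.det A • (↑δ : X) else 0 := by
        intro δ
        rcases eq_or_ne δ (⟨γ, hγ⟩ : {x : X // x ∈ D.base}) with h | h
        · subst h
          simp [Matrix.one_apply]
        · simp [Matrix.smul_apply, Matrix.one_apply, Ne.symm h, h]
      simp only [h3]
      rw [Finset.sum_ite_eq' Finset.univ (⟨γ, hγ⟩ : {x : X // x ∈ D.base})
        (fun δ => Matrix.det A • (↑δ : X)), if_pos (Finset.mem_univ _)]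
    have e1 := congrArg (fun x => D.pair x (p y)) hcomb
    have e2 := congrArg (fun x => D.pair x y) hcomb
    simp only [map_zsmul, map_sum, AddMonoidHom.finset_sum_apply,
      AddMonoidHom.smul_apply, smul_eq_mul] at e1 e2
    apply mul_left_cancel₀ hdetA
    rw [e1, e2]
    exact Finset.sum_congr rfl fun α _ => by rw [hωfix ↑α α.2 y]
  -- equivariance
  refine ⟨fun y hy => hfix hy, ?_, ?_⟩
  · intro w hw
    induction hw using AddSubgroup.closure_induction with
    | mem w hw =>
      obtain ⟨γ, hγ, hwe⟩ := hw
      intro y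
      have h1 : w y = y - D.pair γ y • D.coroot γ := congrFun hwe y
      have h2 : w (p y) = p y - D.pair γ (p y) • D.coroot γ := congrFun hwe (p y)
      rw [h1, h2, hpsub, hpsmul, psimple γ hγ, hstar γ hγ y]
    | zero => intro y; simp
    | add w w' hw hw' ihw ihw' =>
      intro y
      have h1 : (w + w') y = w (w' y) := rfl
      have h2 : (w + w') (p y) = w (w' (p y)) := rfl
      rw [h1, h2, ihw, ihw']
    | neg w hw ihw =>
      intro y
      have h1 := ihw ((-w) y)
      have h2 : w ((-w) y) = y := by simp
      rw [h2] at h1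
      have h3 := congrArg (fun z => (-w) z) h1
      have h4 : (-w) (w (p ((-w) y))) = p ((-w) y) := by simp
      rw [h4] at h3
      exact h3.symm.trans rfl
  · intro y
    rw [hp]
    exact AddSubgroup.sum_mem _ fun α hα => AddSubgroup.zsmul_mem _
      (AddSubgroup.subset_closure
        (show D.coroot α ∈ D.coroot '' (↑D.R : Set X) from
          ⟨α, Finset.mem_coe.mpr (D.base_sub hα), rfl⟩)) _
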